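/- Let G be a non-archimedean Banach space over K with the following property: for every finite-dimensional non-archimedean normed space Y over K, every linear subspace X ⊆ Y and every isometric linear embedding j : X → G, there exists a linear isometry f : Y → G with ‖j − f|_X‖ < 1 (operator norm). Then G is of universal disposition for the class U_FNA; that is, for every such j there exists a linear isometry T : Y → G with T(x) = j(x) for all x ∈ X. -/

import Mathlib

open Metric Set

noncomputable section

variable (K : Type) [NontriviallyNormedField K] [IsUltrametricDist K]

/-- A linear map is an `ε`-isometry if `(1+ε)⁻¹ < ‖f x‖ < 1+ε` whenever `‖x‖ = 1`. -/
def IsEpsIsometry {E F : Type} [NormedAddCommGroup E] [NormedAddCommGroup F]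
    [NormedSpace K E] [NormedSpace K F] (ε : ℝ) (f : E →ₗ[K] F) : Prop :=
  ∀ x : E, ‖x‖ = 1 → (1 + ε)⁻¹ < ‖f x‖ ∧ ‖f x‖ < 1 + ε

/-- A non-archimedean Banach space `E` over `K` is of almost universal disposition for the
class `U_FNA` of all finite-dimensional non-archimedean normed spaces over `K`. -/
def IsAUD (E : Type) [NormedAddCommGroup E] [NormedSpace K E] : Prop :=
  ∀ (Y : Type) [NormedAddCommGroup Y] [NormedSpace K Y] [IsUltrametricDist Y]
    [FiniteDimensional K Y] (X : Submodule K E) (g : X →ₗ[K] Y),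
    (∀ x : X, ‖g x‖ = ‖(x : E)‖) →
    ∀ ε : ℝ, 0 < ε → ε < 1 →
      ∃ f : Y →ₗ[K] E, IsEpsIsometry K ε f ∧ ∀ x : X, f (g (x : X)) = (x : E)

/-- `E` is of universal disposition for the class `U_FNA`. -/
def IsUD (E : Type) [NormedAddCommGroup E] [NormedSpace K E] : Prop :=
  ∀ (Y : Type) [NormedAddCommGroup Y] [NormedSpace K Y] [IsUltrametricDist Y]
    [FiniteDimensional K Y] (X : Submodule K E) (j : X →ₗ[K] Y),
    (∀ x : X, ‖j x‖ = ‖(x : E)‖) →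
      ∃ f : Y →ₗ[K] E, (∀ y : Y, ‖f y‖ = ‖y‖) ∧ ∀ x : X, f (j (x : X)) = (x : E)

/-- A normed space is of countable type if it contains a countable subset whose linear
span is dense. -/
def CountableType (E : Type) [NormedAddCommGroup E] [NormedSpace K E] : Prop :=
  ∃ S : Set E, S.Countable ∧ Dense ((Submodule.span K S : Submodule K E) : Set E)

/-- A metric space is spherically complete if every nested sequence of closed balls has
non-empty intersection. -/
def SphComplete (α : Type) [MetricSpace α] : Prop :=
  ∀ (c : ℕ → α) (r : ℕ → ℝ), (∀ n, 0 ≤ r n) →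
    (∀ n, closedBall (c (n + 1)) (r (n + 1)) ⊆ closedBall (c n) (r n)) →
    (⋂ n, closedBall (c n) (r n)).Nonempty

/-- The set of non-zero norm values of a normed space (e.g. the value group `|K*|`). -/
def NormValues (E : Type) [NormedAddCommGroup E] : Set ℝ :=
  {t : ℝ | ∃ x : E, x ≠ 0 ∧ ‖x‖ = t}

/-- `K` is densely valued: `|K*|` is a dense subset of `(0,∞)`. -/
def DenselyValued : Prop :=
  Ioi (0 : ℝ) ⊆ closure (NormValues K)

end

section MyAux

variable {K : Type} [NontriviallyNormedField K]

private lemma my_norm_add_eq_left {G : Type} [NormedAddCommGroup G] [IsUltrametricDist G]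
    {a b : G} (h : ‖b‖ < ‖a‖) : ‖a + b‖ = ‖a‖ := by
  refine le_antisymm ((IsUltrametricDist.norm_add_le_max a b).trans (by simp [h.le])) ?_
  have h2 : ‖a‖ ≤ max ‖a + b‖ ‖b‖ := by
    simpa using IsUltrametricDist.norm_add_le_max (a + b) (-b)
  rcases max_cases ‖a + b‖ ‖b‖ with ⟨he, _⟩ | ⟨he, _⟩
  · exact h2.trans he.le
  · exact absurd (h2.trans he.le) (not_le.mpr h)

/-- Key extension lemma: a linear map `D : X → G` with pointwise bound `c` extends to all of
`Y` with pointwise bound `s * c` for any `s > 1`. -/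
private lemma my_ext_aux {Y : Type} [NormedAddCommGroup Y] [NormedSpace K Y]
    [IsUltrametricDist Y] [FiniteDimensional K Y]
    {G : Type} [NormedAddCommGroup G] [NormedSpace K G] [CompleteSpace G] :
    ∀ (n : ℕ) (X : Submodule K Y) (D : X →ₗ[K] G) (c : ℝ), 0 ≤ c →
      (∀ x : X, ‖D x‖ ≤ c * ‖(x : Y)‖) → ∀ s : ℝ, 1 < s →
      Module.finrank K Y ≤ Module.finrank K X + n →
      ∃ g : Y →ₗ[K] G, (∀ y : Y, ‖g y‖ ≤ s * c * ‖y‖) ∧ ∀ x : X, g (x : Y) = D x := by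
  intro n
  induction n with
  | zero =>
    intro X D c hc hb s hs hn
    have hX : X = ⊤ := Submodule.eq_top_of_finrank_eq
      (le_antisymm (Submodule.finrank_le X) (by simpa using hn))
    refine ⟨D ∘ₗ LinearMap.codRestrict X LinearMap.id (fun y => by rw [hX]; trivial), ?_, ?_⟩
    · intro y
      have := hb ⟨y, by rw [hX]; trivial⟩
      simp only [LinearMap.comp_apply, LinearMap.codRestrict_apply, LinearMap.id_apply]
      calc ‖D ⟨y, _⟩‖ ≤ c * ‖y‖ := this
        _ ≤ s * c * ‖y‖ := by nlinarith [norm_nonneg y, mul_nonneg hc (norm_nonneg y)]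
    · intro x
      simp only [LinearMap.comp_apply, LinearMap.codRestrict_apply, LinearMap.id_apply]
      congr 1
  | succ n IH =>
    intro X D c hc hb s hs hn
    by_cases hdense : Dense (X : Set Y)
    · -- extend by continuity
      have hb' : ∀ x : X, ‖D x‖ ≤ c * ‖x‖ := hb
      let Dc : X →L[K] G := D.mkContinuous c hb'
      let g' : Y →L[K] G := Dc.extend X.subtypeL
      have hagree : ∀ x : X, g' (x : Y) = D x := fun x =>
        ContinuousLinearMap.extend_eq Dc hdense.denseRange_val
          isUniformEmbedding_subtype_val.isUniformInducing x
      have hbound : ∀ y : Y, ‖g' y‖ ≤ c * ‖y‖ := by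
        have hcl : IsClosed {y : Y | ‖g' y‖ ≤ c * ‖y‖} :=
          isClosed_le g'.continuous.norm (continuous_const.mul continuous_norm)
        have hsub : (X : Set Y) ⊆ {y : Y | ‖g' y‖ ≤ c * ‖y‖} := by
          intro y hy
          have := hagree ⟨y, hy⟩
          simp only [mem_setOf_eq, this]
          exact hb ⟨y, hy⟩
        intro y
        exact hcl.closure_subset_iff.2 hsub (hdense y)
      refine ⟨g'.toLinearMap, fun y => (hbound y).trans ?_, hagree⟩
      nlinarith [norm_nonneg y, mul_nonneg hc (norm_nonneg y)]
    · -- pick a vector away from the closure of X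
      obtain ⟨y₀, hy₀⟩ : ∃ y₀ : Y, y₀ ∉ closure (X : Set Y) := by
        by_contra hall
        push_neg at hall
        exact hdense fun x => hall x
      set d : ℝ := infDist y₀ (X : Set Y) with hd
      have hXne : (X : Set Y).Nonempty := ⟨0, X.zero_mem⟩
      have hd0 : 0 < d := by
        rw [hd, ← Metric.infDist_closure]
        exact (IsClosed.notMem_iff_infDist_pos isClosed_closure
          (hXne.mono subset_closure)).1 hy₀
      set t : ℝ := Real.sqrt s with htdef
      have hs0 : (0:ℝ) ≤ s := by linarith
      have ht : 1 < t := by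
        rw [htdef, show (1:ℝ) = Real.sqrt 1 by simp]
        exact Real.sqrt_lt_sqrt (by norm_num) hs
      have htt : t * t = s := Real.mul_self_sqrt hs0
      have hlt : d < t * d := by nlinarith
      obtain ⟨xs, hxsX, hxs⟩ := (Metric.infDist_lt_iff hXne).1 (lt_of_eq_of_lt hd.symm hlt)
      set z : Y := y₀ - xs with hzdef
      have hznorm : ‖z‖ ≤ t * d := by
        rw [hzdef, ← dist_eq_norm]
        exact hxs.le
      have hzX : z ∉ X := by
        intro hz
        exact hy₀ (subset_closure (by simpa [hzdef] using X.add_mem hz hxsX))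
      -- the key almost-orthogonality estimate
      have key : ∀ x : Y, x ∈ X → ∀ a : K, ‖x‖ ≤ t * ‖x + a • z‖ := by
        intro x hx a
        rcases eq_or_ne a 0 with rfl | ha
        · simp only [zero_smul, add_zero]
          nlinarith [norm_nonneg x]
        · have h1 : ‖a‖ * d ≤ ‖x + a • z‖ := by
            have hrw : x + a • z = a • (a⁻¹ • x + z) := by
              rw [smul_add, smul_smul, mul_inv_cancel₀ ha, one_smul]
            rw [hrw, norm_smul]
            have hmem : xs + -(a⁻¹ • x) ∈ (X : Set Y) :=
              X.add_mem hxsX (X.neg_mem (X.smul_mem _ hx))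
            have h2 : d ≤ ‖a⁻¹ • x + z‖ := by
              calc d ≤ dist y₀ (xs + -(a⁻¹ • x)) := Metric.infDist_le_dist_of_mem hmem
                _ = ‖a⁻¹ • x + z‖ := by
                  rw [dist_eq_norm, hzdef]; congr 1; abel
            exact mul_le_mul_of_nonneg_left h2 (norm_nonneg a)
          have h3 : ‖x‖ ≤ max ‖x + a • z‖ ‖a • z‖ := by
            have := IsUltrametricDist.norm_add_le_max (x + a • z) (-(a • z))
            simpa using this
          have h4 : ‖a • z‖ ≤ t * ‖x + a • z‖ := by
            rw [norm_smul]
            calc ‖a‖ * ‖z‖ ≤ ‖a‖ * (t * d) :=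
              mul_le_mul_of_nonneg_left hznorm (norm_nonneg a)
              _ = t * (‖a‖ * d) := by ring
              _ ≤ t * ‖x + a • z‖ := mul_le_mul_of_nonneg_left h1 (by linarith)
          have h5 : ‖x + a • z‖ ≤ t * ‖x + a • z‖ := by nlinarith [norm_nonneg (x + a • z)]
          exact h3.trans (max_le h5 h4)
      -- extend D by zero on z
      set pD : Y →ₗ.[K] G := ⟨X, D⟩ with hpD
      have hzD : z ∉ pD.domain := hzX
      set pD₁ : Y →ₗ.[K] G := pD.supSpanSingleton z 0 hzD with hpD₁
      have hdom : pD₁.domain = X ⊔ K ∙ z := LinearPMap.domain_supSpanSingleton pD z 0 hzD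
      have happly : ∀ (x : Y) (hx : x ∈ X) (a : K) (hmem : x + a • z ∈ pD₁.domain),
          pD₁ ⟨x + a • z, hmem⟩ = D ⟨x, hx⟩ := by
        intro x hx a hmem
        have := pD.supSpanSingleton_apply_mk z 0 hzD x hx a
        rw [smul_zero, add_zero] at this
        exact this
      have hbound₁ : ∀ u : pD₁.domain, ‖pD₁ u‖ ≤ (t * c) * ‖(u : Y)‖ := by
        intro u
        have hu : (u : Y) ∈ X ⊔ K ∙ z := hdom ▸ u.2
        obtain ⟨x, hx, w, hw, hsum⟩ := Submodule.mem_sup.1 hu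
        obtain ⟨a, rfl⟩ := Submodule.mem_span_singleton.1 hw
        have humem : x + a • z ∈ pD₁.domain := by rw [hsum]; exact u.2
        have hueq : u = ⟨x + a • z, humem⟩ := Subtype.ext hsum.symm
        rw [hueq, happly x hx a humem]
        calc ‖D ⟨x, hx⟩‖ ≤ c * ‖x‖ := hb ⟨x, hx⟩
          _ ≤ c * (t * ‖x + a • z‖) := mul_le_mul_of_nonneg_left (key x hx a) hc
          _ = (t * c) * ‖x + a • z‖ := by ring
      have hle : X ≤ pD₁.domain := by rw [hdom]; exact le_sup_left
      have hzz : z ∈ pD₁.domain := by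
        rw [hdom]
        exact Submodule.mem_sup_right (Submodule.mem_span_singleton_self z)
      have hltX : X < pD₁.domain :=
        lt_of_le_of_ne hle (fun he => hzX (he ▸ hzz))
      have hfr : Module.finrank K X < Module.finrank K pD₁.domain :=
        Submodule.finrank_lt_finrank_of_lt hltX
      obtain ⟨g, hgb, hga⟩ := IH pD₁.domain pD₁.toFun (t * c)
        (mul_nonneg (by linarith) hc) hbound₁ t ht (by omega)
      refine ⟨g, fun y => ?_, fun x => ?_⟩
      · calc ‖g y‖ ≤ t * (t * c) * ‖y‖ := hgb y
          _ = s * c * ‖y‖ := by rw [← htt]; ring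
      · have hxmem : (x : Y) ∈ pD₁.domain := hle x.2
        have hxmem' : (x : Y) + (0:K) • z ∈ pD₁.domain := by simpa using hxmem
        have : g ((x : Y)) = pD₁ ⟨(x : Y), hxmem⟩ := hga ⟨(x : Y), hxmem⟩
        rw [this]
        have heq : (⟨(x : Y), hxmem⟩ : pD₁.domain) = ⟨(x : Y) + (0:K) • z, hxmem'⟩ :=
          Subtype.ext (by simp)
        rw [heq, happly (x : Y) x.2 0 hxmem']

end MyAux

/-- If for every finite-dimensional non-archimedean normed space `Y`, every subspace
`X ⊆ Y` and every isometric embedding `j : X → G` there is an isometry `f : Y → G` with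
`‖j - f|_X‖ < 1`, then `G` is of universal disposition for `U_FNA`: every such `j`
extends to an isometry `T : Y → G`. -/
theorem isUD_of_almost_extension (K : Type) [NontriviallyNormedField K] [IsUltrametricDist K]
    (G : Type) [NormedAddCommGroup G] [NormedSpace K G] [CompleteSpace G] [IsUltrametricDist G]
    (h : ∀ (Y : Type) [NormedAddCommGroup Y] [NormedSpace K Y] [IsUltrametricDist Y]
      [FiniteDimensional K Y] (X : Submodule K Y) (j : X →L[K] G),
      (∀ x : X, ‖j x‖ = ‖(x : Y)‖) →
      ∃ f : Y →L[K] G, (∀ y : Y, ‖f y‖ = ‖y‖) ∧ ‖j - f.comp X.subtypeL‖ < 1) :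
    ∀ (Y : Type) [NormedAddCommGroup Y] [NormedSpace K Y] [IsUltrametricDist Y]
      [FiniteDimensional K Y] (X : Submodule K Y) (j : X →L[K] G),
      (∀ x : X, ‖j x‖ = ‖(x : Y)‖) →
      ∃ T : Y →L[K] G, (∀ y : Y, ‖T y‖ = ‖y‖) ∧ ∀ x : X, T (x : Y) = j x := by
  intro Y _ _ _ _ X j hj
  obtain ⟨f, hf_iso, hf_norm⟩ := h Y X j hj
  set D : X →L[K] G := j - f.comp X.subtypeL with hD
  have hDb : ∀ x : X, ‖D x‖ ≤ ‖D‖ * ‖(x : Y)‖ := fun x => D.le_opNorm x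
  obtain ⟨s, hs1, hs2⟩ : ∃ s : ℝ, 1 < s ∧ s * ‖D‖ < 1 := by
    rcases eq_or_lt_of_le (norm_nonneg D) with h0 | h0
    · exact ⟨2, one_lt_two, by rw [← h0]; norm_num⟩
    · refine ⟨(1 + ‖D‖⁻¹) / 2, ?_, ?_⟩
      · have h1 : 1 < ‖D‖⁻¹ := (one_lt_inv₀ h0).2 hf_norm
        linarith
      · have h1 : (1 + ‖D‖⁻¹) / 2 * ‖D‖ = (‖D‖ + 1) / 2 := by
          field_simp
        rw [h1]
        linarith
  obtain ⟨g, hgb, hga⟩ := my_ext_aux (Module.finrank K Y) X (D : X →ₗ[K] G) ‖D‖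
    (norm_nonneg D) hDb s hs1 (Nat.le_add_left _ _)
  let gc : Y →L[K] G := LinearMap.mkContinuous g (s * ‖D‖) hgb
  refine ⟨f + gc, ?_, ?_⟩
  · intro y
    rcases eq_or_ne y 0 with rfl | hy
    · simp
    · have hy0 : 0 < ‖y‖ := norm_pos_iff.2 hy
      have h1 : ‖gc y‖ < ‖y‖ := by
        have := hgb y
        have : ‖gc y‖ ≤ s * ‖D‖ * ‖y‖ := this
        nlinarith
      have h2 : ‖gc y‖ < ‖f y‖ := by rw [hf_iso y]; exact h1
      calc ‖(f + gc) y‖ = ‖f y + gc y‖ := by rw [ContinuousLinearMap.add_apply]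
        _ = ‖f y‖ := my_norm_add_eq_left h2
        _ = ‖y‖ := hf_iso y
  · intro x
    have hgx : gc (x : Y) = D x := hga x
    calc (f + gc) (x : Y) = f (x : Y) + gc (x : Y) := rfl
      _ = f (x : Y) + (j x - f (x : Y)) := by
        rw [hgx, hD]
        simp [ContinuousLinearMap.sub_apply]
      _ = j x := by abel
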